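/- (Katz–Trevisan PIR bound.) There exists a universal constant K such that for all n, t, ℓ ≥ 1, every one-round 2-server private information retrieval scheme for n-bit databases with query size t, answer size ℓ, perfect recovery (ε = 1/2) and perfect privacy (η = 0) satisfies t ≥ 2·log₂(n/ℓ) − K. -/

import Mathlib

/-- A one-round 2-server private information retrieval scheme for `n`-bit databases
with query size `t` and answer size `ℓ`: a finite probability space `Fin R` with
weights `pr` (the user's randomness), query functions `q1, q2`, the two servers'
answer functions `ans1, ans2`, and the user's output functions `out`. -/
structure PIRScheme (n t ℓ : ℕ) where
  R : ℕ
  pr : Fin R → ℝ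
  q1 : Fin n → Fin R → Fin t → Bool
  q2 : Fin n → Fin R → Fin t → Bool
  ans1 : (Fin n → Bool) → (Fin t → Bool) → Fin ℓ → Bool
  ans2 : (Fin n → Bool) → (Fin t → Bool) → Fin ℓ → Bool
  out : Fin n → Fin R → (Fin ℓ → Bool) → (Fin ℓ → Bool) → Bool

/-- The user's randomness is a probability distribution. -/
def PIRScheme.ProbDist {n t ℓ : ℕ} (P : PIRScheme n t ℓ) : Prop :=
  (∀ r, 0 ≤ P.pr r) ∧ ∑ r, P.pr r = 1

/-- Recovery probability at least `1/2 + ε`: for every database `x` and index `i`, the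
user outputs `x_i` with probability at least `1/2 + ε`. -/
def PIRScheme.Correct {n t ℓ : ℕ} (P : PIRScheme n t ℓ) (ε : ℝ) : Prop :=
  ∀ (x : Fin n → Bool) (i : Fin n),
    1 / 2 + ε ≤
      ∑ r ∈ Finset.univ.filter
        (fun r => P.out i r (P.ans1 x (P.q1 i r)) (P.ans2 x (P.q2 i r)) = x i),
        P.pr r

/-- `(1-η)`-security: for each server, the distributions of the query induced by any
two indices `i1, i2` are within total variation distance `η`. -/
def PIRScheme.Secure {n t ℓ : ℕ} (P : PIRScheme n t ℓ) (η : ℝ) : Prop :=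
  ∀ i1 i2 : Fin n,
    (1 / 2) * ∑ q : Fin t → Bool,
      |(∑ r ∈ Finset.univ.filter (fun r => P.q1 i1 r = q), P.pr r) -
        (∑ r ∈ Finset.univ.filter (fun r => P.q1 i2 r = q), P.pr r)| ≤ η ∧
    (1 / 2) * ∑ q : Fin t → Bool,
      |(∑ r ∈ Finset.univ.filter (fun r => P.q2 i1 r = q), P.pr r) -
        (∑ r ∈ Finset.univ.filter (fun r => P.q2 i2 r = q), P.pr r)| ≤ η

/-- The scheme uses only `b` (predetermined, depending on `i` and `r`) bits of each of
the two `ℓ`-bit answers. -/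
def PIRScheme.UsesBits {n t ℓ : ℕ} (P : PIRScheme n t ℓ) (b : ℕ) : Prop :=
  ∀ (i : Fin n) (r : Fin P.R),
    ∃ S0 S1 : Finset (Fin ℓ), S0.card = b ∧ S1.card = b ∧
      ∀ a0 a1 a0' a1' : Fin ℓ → Bool,
        (∀ k ∈ S0, a0 k = a0' k) → (∀ k ∈ S1, a1 k = a1' k) →
          P.out i r a0 a1 = P.out i r a0' a1'

namespace KTPIR

open Finset

/-! ### Product/sum interchange over Boolean function spaces -/

lemma sum_prod_bool {V : Type*} [Fintype V] [DecidableEq V] (G : V → Bool → ℝ) :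
    ∑ f : V → Bool, ∏ v, G v (f v) = ∏ v, (G v false + G v true) := by
  classical
  have h := Finset.prod_univ_sum (fun _ : V => (Finset.univ : Finset Bool)) (fun v b => G v b)
  rw [Fintype.piFinset_univ] at h
  rw [← h]
  refine Finset.prod_congr rfl fun v _ => ?_
  rw [Fintype.sum_bool]
  ring

/-- Independent Bernoulli sampling weights on subsets of `V` (as functions `V → Bool`). -/
noncomputable def bern {V : Type*} [Fintype V] (σv : V → ℝ) (f : V → Bool) : ℝ :=
  ∏ v, (if f v then σv v else 1 - σv v)

/-- The 0/1 indicator of a Boolean. -/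
noncomputable def ind (b : Bool) : ℝ := if b then 1 else 0

lemma bern_nonneg {V : Type*} [Fintype V] (σv : V → ℝ) (h0 : ∀ v, 0 ≤ σv v)
    (h1 : ∀ v, σv v ≤ 1) (f : V → Bool) : 0 ≤ bern σv f := by
  refine Finset.prod_nonneg fun v _ => ?_
  by_cases h : f v <;> simp [h] <;> linarith [h0 v, h1 v]

lemma sum_bern_mul {V : Type*} [Fintype V] [DecidableEq V] (σv : V → ℝ) (E : V → Bool → ℝ) :
    ∑ f : V → Bool, bern σv f * ∏ v, E v (f v)
      = ∏ v, ((1 - σv v) * E v false + σv v * E v true) := by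
  have h : ∀ f : V → Bool, bern σv f * ∏ v, E v (f v)
      = ∏ v, ((if f v then σv v else 1 - σv v) * E v (f v)) := by
    intro f; rw [bern, ← Finset.prod_mul_distrib]
  simp_rw [h]
  rw [sum_prod_bool (fun v b => (if b then σv v else 1 - σv v) * E v b)]
  refine Finset.prod_congr rfl fun v _ => by
    simp only [if_true, if_false, Bool.false_eq_true, ite_true, ite_false]

lemma sum_bern {V : Type*} [Fintype V] [DecidableEq V] (σv : V → ℝ) :
    ∑ f : V → Bool, bern σv f = 1 := by
  have := sum_bern_mul σv (fun _ _ => (1 : ℝ))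
  simpa using this

lemma sum_bern_ind {V : Type*} [Fintype V] [DecidableEq V] (σv : V → ℝ) (v0 : V) :
    ∑ f : V → Bool, bern σv f * ind (f v0) = σv v0 := by
  have h : ∀ f : V → Bool, bern σv f * ind (f v0)
      = bern σv f * ∏ v, (if v = v0 then ind (f v) else 1) := by
    intro f
    congr 1
    rw [Finset.prod_ite_eq' Finset.univ v0 (fun v => ind (f v))]
    simp
  simp_rw [h]
  rw [sum_bern_mul σv (fun v b => if v = v0 then ind b else 1)]
  rw [Finset.prod_eq_single v0]
  · simp [ind]
  · intro v _ hv; simp [hv]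
  · simp

lemma sum_bern_miss {V ι : Type*} [Fintype V] [DecidableEq V] [DecidableEq ι]
    (σv : V → ℝ) (M : Finset ι) (key : ι → V)
    (hinj : ∀ e ∈ M, ∀ e' ∈ M, key e = key e' → e = e') (φ : ι → ℝ) :
    ∑ f : V → Bool, bern σv f * ∏ e ∈ M, (1 - ind (f (key e)) * φ e)
      = ∏ e ∈ M, (1 - σv (key e) * φ e) := by
  classical
  have hcard : ∀ v : V, ∀ e ∈ M.filter (fun e => key e = v),
      ∀ e' ∈ M.filter (fun e => key e = v), e = e' := by
    intro v e he e' he'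
    have h1 := Finset.mem_filter.mp he
    have h2 := Finset.mem_filter.mp he'
    exact hinj e h1.1 e' h2.1 (h1.2.trans h2.2.symm)
  have h1 : ∀ f : V → Bool, ∏ e ∈ M, (1 - ind (f (key e)) * φ e)
      = ∏ v : V, ∏ e ∈ M.filter (fun e => key e = v), (1 - ind (f v) * φ e) := by
    intro f
    rw [← Finset.prod_fiberwise_of_maps_to (fun e (_ : e ∈ M) => Finset.mem_univ (key e))
      (fun e => 1 - ind (f (key e)) * φ e)]
    exact Finset.prod_congr rfl fun v _ => Finset.prod_congr rfl fun e he => by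
      rw [(Finset.mem_filter.mp he).2]
  simp_rw [h1]
  rw [sum_bern_mul σv (fun v b => ∏ e ∈ M.filter (fun e => key e = v), (1 - ind b * φ e))]
  have h2 : ∀ v : V,
      (1 - σv v) * (∏ e ∈ M.filter (fun e => key e = v), (1 - ind false * φ e))
        + σv v * (∏ e ∈ M.filter (fun e => key e = v), (1 - ind true * φ e))
      = ∏ e ∈ M.filter (fun e => key e = v), (1 - σv v * φ e) := by
    intro v
    rcases Finset.eq_empty_or_nonempty (M.filter (fun e => key e = v)) with h | ⟨e0, he0⟩
    · simp [h]
    · have hsing : M.filter (fun e => key e = v) = {e0} := by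
        apply Finset.eq_singleton_iff_unique_mem.mpr
        exact ⟨he0, fun e' he' => hcard v e' he' e0 he0⟩
      simp [hsing, ind]
      ring
  simp_rw [h2]
  rw [← Finset.prod_fiberwise_of_maps_to (fun e (_ : e ∈ M) => Finset.mem_univ (key e))
      (fun e => 1 - σv (key e) * φ e)]
  exact Finset.prod_congr rfl fun v _ => Finset.prod_congr rfl fun e he => by
      rw [(Finset.mem_filter.mp he).2]

lemma sum_bern_miss₂ {V U : Type*} [Fintype V] [DecidableEq V] [Fintype U] [DecidableEq U]
    (σv : V → ℝ) (σu : U → ℝ) (M : Finset (V × U))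
    (h1 : ∀ e ∈ M, ∀ e' ∈ M, e.1 = e'.1 → e = e')
    (h2 : ∀ e ∈ M, ∀ e' ∈ M, e.2 = e'.2 → e = e') :
    ∑ f : V → Bool, ∑ g : U → Bool,
        bern σv f * bern σu g * ∏ e ∈ M, (1 - ind (f e.1) * ind (g e.2))
      = ∏ e ∈ M, (1 - σv e.1 * σu e.2) := by
  classical
  have step1 : ∀ g : U → Bool,
      ∑ f : V → Bool, bern σv f * ∏ e ∈ M, (1 - ind (f e.1) * ind (g e.2))
        = ∏ e ∈ M, (1 - σv e.1 * ind (g e.2)) :=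
    fun g => sum_bern_miss σv M Prod.fst h1 (fun e => ind (g e.2))
  rw [Finset.sum_comm]
  have step2 : ∀ g : U → Bool,
      ∑ f : V → Bool, bern σv f * bern σu g * ∏ e ∈ M, (1 - ind (f e.1) * ind (g e.2))
        = bern σu g * ∏ e ∈ M, (1 - σv e.1 * ind (g e.2)) := by
    intro g
    rw [← step1 g, Finset.mul_sum]
    exact Finset.sum_congr rfl fun f _ => by ring
  simp_rw [step2]
  have h3 : ∀ g : U → Bool, ∏ e ∈ M, (1 - σv e.1 * ind (g e.2))
      = ∏ e ∈ M, (1 - ind (g e.2) * σv e.1) :=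
    fun g => Finset.prod_congr rfl fun e _ => by ring
  simp_rw [h3]
  rw [sum_bern_miss σu M Prod.snd h2 (fun e => σv e.1)]
  exact Finset.prod_congr rfl fun e _ => by ring

/-! ### Greedy extraction of a matching from a doubly-substochastic coupling -/

lemma exists_matching {α β : Type*} [Fintype α] [Fintype β] [DecidableEq α] [DecidableEq β]
    (θ : ℝ) :
    ∀ (N : ℕ) (W : α → β → ℝ),
    ((Finset.univ : Finset (α × β)).filter (fun e => W e.1 e.2 ≠ 0)).card ≤ N →
    (∀ a b, 0 ≤ W a b) →
    (∀ a, ∑ b, W a b ≤ θ) → (∀ b, ∑ a, W a b ≤ θ) →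
    ∃ M : Finset (α × β), (∀ e ∈ M, W e.1 e.2 ≠ 0) ∧
      (∀ e ∈ M, ∀ e' ∈ M, e ≠ e' → e.1 ≠ e'.1 ∧ e.2 ≠ e'.2) ∧
      ∑ a, ∑ b, W a b ≤ 2 * θ * M.card := by
  classical
  intro N
  induction N with
  | zero =>
    intro W hcard hpos hrow hcol
    refine ⟨∅, by simp, by simp, ?_⟩
    have : ∀ a b, W a b = 0 := by
      intro a b
      by_contra h
      have : (a, b) ∈ (Finset.univ : Finset (α × β)).filter (fun e => W e.1 e.2 ≠ 0) := by
        simp [h]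
      have := Finset.card_pos.mpr ⟨_, this⟩
      omega
    simp [this]
  | succ N ih =>
    intro W hcard hpos hrow hcol
    by_cases hz : ∑ a, ∑ b, W a b ≤ 0
    · exact ⟨∅, by simp, by simp, by simpa using hz⟩
    · push_neg at hz
      have hex : ∃ a b, W a b ≠ 0 := by
        by_contra h
        push_neg at h
        simp [h] at hz
      obtain ⟨a0, b0, hab⟩ := hex
      set W' : α → β → ℝ := fun a b => if a = a0 ∨ b = b0 then 0 else W a b with hW'
      have hW'pos : ∀ a b, 0 ≤ W' a b := by
        intro a b; by_cases h : a = a0 ∨ b = b0 <;> simp [hW', h, hpos a b]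
      have hW'le : ∀ a b, W' a b ≤ W a b := by
        intro a b; by_cases h : a = a0 ∨ b = b0 <;> simp [hW', h, hpos a b]
      have hsub : ((Finset.univ : Finset (α × β)).filter (fun e => W' e.1 e.2 ≠ 0))
          ⊆ ((Finset.univ : Finset (α × β)).filter (fun e => W e.1 e.2 ≠ 0)) \ {(a0, b0)} := by
        intro e he
        simp only [Finset.mem_filter, Finset.mem_univ, true_and] at he
        have hne : ¬(e.1 = a0 ∨ e.2 = b0) := by
          by_contra h; simp [hW', h] at he
        simp only [Finset.mem_sdiff, Finset.mem_filter, Finset.mem_univ, true_and,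
          Finset.mem_singleton]
        constructor
        · intro h; apply he; simp [hW', hne, h]
        · intro h; apply hne; left; rw [h]
      have hmem : (a0, b0) ∈ (Finset.univ : Finset (α × β)).filter (fun e => W e.1 e.2 ≠ 0) := by
        simp [hab]
      have hcard' : ((Finset.univ : Finset (α × β)).filter (fun e => W' e.1 e.2 ≠ 0)).card ≤ N := by
        have h1 := Finset.card_le_card hsub
        have h2 : (((Finset.univ : Finset (α × β)).filter (fun e => W e.1 e.2 ≠ 0)) \ {(a0, b0)}).card
            = ((Finset.univ : Finset (α × β)).filter (fun e => W e.1 e.2 ≠ 0)).card - 1 := by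
          rw [Finset.card_sdiff_of_subset (by simpa using hmem)]
          simp
        omega
      have hrow' : ∀ a, ∑ b, W' a b ≤ θ := fun a =>
        le_trans (Finset.sum_le_sum fun b _ => hW'le a b) (hrow a)
      have hcol' : ∀ b, ∑ a, W' a b ≤ θ := fun b =>
        le_trans (Finset.sum_le_sum fun a _ => hW'le a b) (hcol b)
      obtain ⟨M', hM1, hM2, hM3⟩ := ih W' hcard' hW'pos hrow' hcol'
      have hnotmem : (a0, b0) ∉ M' := by
        intro h
        exact hM1 _ h (by simp [hW'])
      refine ⟨insert (a0, b0) M', ?_, ?_, ?_⟩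
      · intro e he
        rcases Finset.mem_insert.mp he with h | h
        · rw [h]; exact hab
        · intro hc
          exact hM1 e h (by by_cases hh : e.1 = a0 ∨ e.2 = b0 <;> simp [hW', hh, hc])
      · have hold : ∀ e ∈ M', e.1 ≠ a0 ∧ e.2 ≠ b0 := by
          intro e he
          have := hM1 e he
          constructor <;> intro h <;> exact this (by simp [hW', h])
        intro e he e' he' hne
        rcases Finset.mem_insert.mp he with h | h <;> rcases Finset.mem_insert.mp he' with h' | h'
        · exact absurd (h.trans h'.symm) hne
        · have := hold e' h'
          rw [h]
          exact ⟨fun hc => this.1 hc.symm, fun hc => this.2 hc.symm⟩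
        · have := hold e h
          rw [h']
          exact this
        · exact hM2 e h e' h' hne
      · have hdiff : ∑ a, ∑ b, W a b ≤ (∑ a, ∑ b, W' a b) + 2 * θ := by
          have hpt : ∀ a b, W a b ≤ W' a b + (if a = a0 then W a b else 0)
              + (if b = b0 then W a b else 0) := by
            intro a b
            by_cases h1 : a = a0
            · have h0 : W' a b = 0 := by simp [hW', h1]
              have hb : (0:ℝ) ≤ if b = b0 then W a b else 0 := by
                by_cases h : b = b0
                · simpa [h] using hpos a b0
                · simp [h]
              rw [h0, if_pos h1]
              linarith
            · by_cases h2 : b = b0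
              · simp [hW', h1, h2, hpos a b0]
              · simp [hW', h1, h2]
          calc ∑ a, ∑ b, W a b
              ≤ ∑ a, ∑ b, (W' a b + (if a = a0 then W a b else 0) + (if b = b0 then W a b else 0)) :=
                Finset.sum_le_sum fun a _ => Finset.sum_le_sum fun b _ => hpt a b
            _ = (∑ a, ∑ b, W' a b) + (∑ b, W a0 b) + (∑ a, W a b0) := by
                simp [Finset.sum_add_distrib, Finset.sum_ite_eq',
                  Finset.sum_comm (f := fun a b => if b = b0 then W a b else 0)]
            _ ≤ (∑ a, ∑ b, W' a b) + θ + θ := by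
                have := hrow a0; have := hcol b0; linarith
            _ = (∑ a, ∑ b, W' a b) + 2 * θ := by ring
        rw [Finset.card_insert_of_notMem hnotmem]
        push_cast
        calc ∑ a, ∑ b, W a b ≤ (∑ a, ∑ b, W' a b) + 2 * θ := hdiff
          _ ≤ 2 * θ * M'.card + 2 * θ := by linarith
          _ = 2 * θ * (M'.card + 1) := by ring

/-! ### Small auxiliary facts -/

lemma card_fin_lt (m k : ℕ) (hk : k ≤ m) :
    ((Finset.univ : Finset (Fin m)).filter (fun c => c.val < k)).card = k := by
  rw [← Finset.card_range k]
  apply Finset.card_bij (fun (a : Fin m) _ => a.val)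
  · intro a ha
    simp only [Finset.mem_filter] at ha
    simpa using ha.2
  · intro a ha b hb hab
    exact Fin.val_injective hab
  · intro b hb
    simp only [Finset.mem_range] at hb
    exact ⟨⟨b, lt_of_lt_of_le hb hk⟩, by simp [hb], rfl⟩

/-- Any set of indices that can be perfectly decoded by reading the sampled answer
blocks has size at most `ℓ·(#sampled blocks)`. -/
lemma card_decset (n ℓq : ℕ) {V : Type*} [Fintype V] [DecidableEq V]
    (A1 A2 : (Fin n → Bool) → V → (Fin ℓq → Bool)) (f g : V → Bool)
    (S : Finset (Fin n))
    (hS : ∀ i ∈ S, ∃ a b : V, f a = true ∧ g b = true ∧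
        ∃ dec : (Fin ℓq → Bool) → (Fin ℓq → Bool) → Bool, ∀ x, dec (A1 x a) (A2 x b) = x i) :
    S.card ≤ ℓq * ((Finset.univ.filter (fun v => f v = true)).card
      + (Finset.univ.filter (fun v => g v = true)).card) := by
  classical
  set s1 := Finset.univ.filter (fun v => f v = true) with hs1
  set s2 := Finset.univ.filter (fun v => g v = true) with hs2
  set ext : (↥S → Bool) → (Fin n → Bool) :=
    fun y i => if h : i ∈ S then y ⟨i, h⟩ else false with hext
  set Φ : (↥S → Bool) → ((↥s1 → (Fin ℓq → Bool)) × (↥s2 → (Fin ℓq → Bool))) :=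
    fun y => (fun a => A1 (ext y) a.1, fun b => A2 (ext y) b.1) with hΦ
  have hinj : Function.Injective Φ := by
    intro y y' h
    funext i
    obtain ⟨a, b, hfa, hgb, dec, hdec⟩ := hS i.1 i.2
    have hamem : a ∈ s1 := Finset.mem_filter.mpr ⟨Finset.mem_univ a, hfa⟩
    have hbmem : b ∈ s2 := Finset.mem_filter.mpr ⟨Finset.mem_univ b, hgb⟩
    have h1 : A1 (ext y) a = A1 (ext y') a := by
      have := congrArg Prod.fst h
      exact congrFun this ⟨a, hamem⟩
    have h2 : A2 (ext y) b = A2 (ext y') b := by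
      have := congrArg Prod.snd h
      exact congrFun this ⟨b, hbmem⟩
    have hy : y i = ext y i.1 := by
      rw [hext]
      simp [i.2]
    have hy' : y' i = ext y' i.1 := by
      rw [hext]
      simp [i.2]
    rw [hy, hy', ← hdec (ext y), ← hdec (ext y'), h1, h2]
  have hcardle := Fintype.card_le_of_injective Φ hinj
  have hc1 : Fintype.card (↥S → Bool) = 2 ^ S.card := by
    rw [Fintype.card_fun, Fintype.card_coe, Fintype.card_bool]
  have hc2 : Fintype.card ((↥s1 → (Fin ℓq → Bool)) × (↥s2 → (Fin ℓq → Bool)))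
      = 2 ^ (ℓq * s1.card) * 2 ^ (ℓq * s2.card) := by
    simp only [Fintype.card_prod, Fintype.card_fun, Fintype.card_coe, Fintype.card_bool,
      Fintype.card_fin, ← pow_mul]
  rw [hc1, hc2, ← pow_add] at hcardle
  have := (Nat.pow_le_pow_iff_right (by norm_num : 1 < 2)).mp hcardle
  calc S.card ≤ ℓq * s1.card + ℓq * s2.card := this
    _ = ℓq * (s1.card + s2.card) := by ring

lemma pow_miss (m k : ℕ) (hm : 1 ≤ m) (hk : (m:ℝ) ≤ 2 * k) :
    (1 - (Real.sqrt m)⁻¹ * (Real.sqrt m)⁻¹) ^ k ≤ 2/3 := by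
  have hmpos : (0:ℝ) < m := by positivity
  have hσσ : (Real.sqrt m)⁻¹ * (Real.sqrt m)⁻¹ = ((m:ℝ))⁻¹ := by
    rw [← mul_inv, Real.mul_self_sqrt (le_of_lt hmpos)]
  rw [hσσ]
  have hminv1 : ((m:ℝ))⁻¹ ≤ 1 := by
    rw [inv_le_one_iff₀]
    right
    exact_mod_cast hm
  have h0 : (0:ℝ) ≤ 1 - ((m:ℝ))⁻¹ := by linarith
  have h1 : (1:ℝ) - ((m:ℝ))⁻¹ ≤ Real.exp (-((m:ℝ))⁻¹) := by
    linarith [Real.add_one_le_exp (-((m:ℝ))⁻¹)]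
  calc (1 - ((m:ℝ))⁻¹) ^ k ≤ (Real.exp (-((m:ℝ))⁻¹)) ^ k := pow_le_pow_left₀ h0 h1 k
    _ = Real.exp ((k:ℝ) * (-((m:ℝ))⁻¹)) := by rw [← Real.exp_nat_mul]
    _ ≤ Real.exp (-(1/2)) := by
        apply Real.exp_le_exp.mpr
        have h2 : (1:ℝ)/2 ≤ (k:ℝ) / (m:ℝ) := by
          rw [le_div_iff₀ hmpos]
          linarith
        have h3 : (k:ℝ) * (-((m:ℝ))⁻¹) = -((k:ℝ)/(m:ℝ)) := by
          field_simp
        rw [h3]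
        linarith
    _ ≤ 2/3 := by
        rw [Real.exp_neg]
        have h32 : (3:ℝ)/2 ≤ Real.exp (1/2) := by
          linarith [Real.add_one_le_exp ((1:ℝ)/2)]
        have hpos : (0:ℝ) < Real.exp (1/2) := Real.exp_pos _
        rw [inv_le_comm₀ hpos (by norm_num)]
        linarith

lemma final_chain (n t ℓq : ℕ) (hn : 1 ≤ n) (hl : 1 ≤ ℓq)
    (h : (n:ℝ)/3 ≤ (ℓq:ℝ) * (3 * Real.sqrt ((2^t : ℕ):ℝ) + 3 * Real.sqrt ((2^t : ℕ):ℝ))) :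
    2 * Real.logb 2 ((n:ℝ)/ℓq) - 9 ≤ t := by
  have hcast : ((2^t : ℕ):ℝ) = (2:ℝ)^t := by push_cast; ring
  rw [hcast] at h
  have hmnn : (0:ℝ) ≤ (2:ℝ)^t := by positivity
  have hs0 : 0 ≤ Real.sqrt ((2:ℝ)^t) := Real.sqrt_nonneg _
  have hln : (0:ℝ) < ℓq := by exact_mod_cast hl
  have hnn : (0:ℝ) < n := by exact_mod_cast hn
  have hn18 : (n:ℝ) ≤ 18 * (ℓq:ℝ) * Real.sqrt ((2:ℝ)^t) := by nlinarith
  set x : ℝ := (n:ℝ)/ℓq with hxdef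
  have hx : 0 < x := by positivity
  have hxle : x ≤ 18 * Real.sqrt ((2:ℝ)^t) := by
    rw [hxdef, div_le_iff₀ hln]
    nlinarith
  have hx2 : x^2 ≤ (2:ℝ)^(t+9) := by
    have h1 : x^2 ≤ (18 * Real.sqrt ((2:ℝ)^t))^2 := by
      apply pow_le_pow_left₀ hx.le hxle
    have h2 : (18 * Real.sqrt ((2:ℝ)^t))^2 = 324 * (2:ℝ)^t := by
      rw [mul_pow, Real.sq_sqrt hmnn]
      norm_num
    have h3 : (2:ℝ)^(t+9) = (2:ℝ)^t * 512 := by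
      rw [pow_add]
      norm_num
    rw [h3]
    nlinarith
  have hlogb : Real.logb 2 (x^2) ≤ Real.logb 2 ((2:ℝ)^(t+9)) :=
    Real.logb_le_logb_of_le (by norm_num) (by positivity) hx2
  rw [Real.logb_pow, Real.logb_pow, Real.logb_self_eq_one (by norm_num : (1:ℝ) < 2)] at hlogb
  push_cast at hlogb
  linarith

/-! ### The sampling argument -/

lemma sampling {V : Type*} [Fintype V] [DecidableEq V] (n lq : ℕ)
    (σ : ℝ)
    (σv1 σv2 : V → ℝ) (h10 : ∀ v, 0 ≤ σv1 v) (h11 : ∀ v, σv1 v ≤ 1)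
    (h20 : ∀ v, 0 ≤ σv2 v) (h21 : ∀ v, σv2 v ≤ 1)
    (M : Fin n → Finset (V × V))
    (hMdisj : ∀ i, ∀ e ∈ M i, ∀ e' ∈ M i, e ≠ e' → e.1 ≠ e'.1 ∧ e.2 ≠ e'.2)
    (hMσ1 : ∀ i, ∀ e ∈ M i, σv1 e.1 = σ) (hMσ2 : ∀ i, ∀ e ∈ M i, σv2 e.2 = σ)
    (hMmiss : ∀ i, (1 - σ * σ) ^ ((M i).card) ≤ 2/3)
    (DecSet : (V → Bool) → (V → Bool) → Finset (Fin n))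
    (hDS : ∀ f g i, (∃ e ∈ M i, f e.1 = true ∧ g e.2 = true) → i ∈ DecSet f g)
    (hcard : ∀ f g : V → Bool,
      ((DecSet f g).card : ℝ)
        ≤ (lq:ℝ) * (((Finset.univ.filter (fun v => f v = true)).card : ℝ)
            + ((Finset.univ.filter (fun v => g v = true)).card : ℝ))) :
    (n : ℝ)/3 ≤ (lq:ℝ) * ((∑ v, σv1 v) + (∑ v, σv2 v)) := by
  classical
  set miss : Fin n → (V → Bool) → (V → Bool) → ℝ :=
    fun i f g => ∏ e ∈ M i, (1 - ind (f e.1) * ind (g e.2)) with hmissdef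
  have hmiss01 : ∀ i f g, miss i f g = 0 ∨ miss i f g = 1 := by
    intro i f g
    rw [hmissdef]
    dsimp only
    by_cases h : ∃ e ∈ M i, f e.1 = true ∧ g e.2 = true
    · left
      obtain ⟨e, he, hf, hg⟩ := h
      exact Finset.prod_eq_zero he (by simp [ind, hf, hg])
    · right
      push_neg at h
      apply Finset.prod_eq_one
      intro e he
      rcases hf : f e.1 with _ | _
      · simp [ind, hf]
      · have := h e he hf
        simp [ind, this]
  have hmiss_dec : ∀ i f g, miss i f g = 0 → i ∈ DecSet f g := by
    intro i f g h0
    rw [hmissdef] at h0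
    dsimp only at h0
    obtain ⟨e, he, hfac⟩ := Finset.prod_eq_zero_iff.mp h0
    have hf : f e.1 = true := by
      by_contra hf
      simp [ind, hf] at hfac
    have hg : g e.2 = true := by
      by_contra hg
      simp [ind, hg] at hfac
    exact hDS f g i ⟨e, he, hf, hg⟩
  have hpoint : ∀ f g : V → Bool, ∑ i : Fin n, (1 - miss i f g)
      ≤ (lq:ℝ) * (((Finset.univ.filter (fun v => f v = true)).card : ℝ)
            + ((Finset.univ.filter (fun v => g v = true)).card : ℝ)) := by
    intro f g
    refine le_trans ?_ (hcard f g)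
    have h1 : ∑ i : Fin n, (1 - miss i f g)
        ≤ ∑ i : Fin n, (if i ∈ DecSet f g then (1:ℝ) else 0) := by
      apply Finset.sum_le_sum
      intro i _
      rcases hmiss01 i f g with h | h
      · rw [h, if_pos (hmiss_dec i f g h)]; norm_num
      · rw [h]
        split <;> norm_num
    refine le_trans h1 ?_
    rw [Finset.sum_ite_mem, Finset.univ_inter, Finset.sum_const, nsmul_eq_mul, mul_one]
  have hW0 : ∀ f g : V → Bool, 0 ≤ bern σv1 f * bern σv2 g :=
    fun f g => mul_nonneg (bern_nonneg _ h10 h11 f) (bern_nonneg _ h20 h21 g)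
  have hEmiss : ∀ i, ∑ f : V → Bool, ∑ g : V → Bool,
      bern σv1 f * bern σv2 g * miss i f g = (1 - σ * σ) ^ ((M i).card) := by
    intro i
    rw [hmissdef]
    dsimp only
    rw [sum_bern_miss₂ σv1 σv2 (M i)
      (fun e he e' he' h => by
        by_contra hne
        exact (hMdisj i e he e' he' hne).1 h)
      (fun e he e' he' h => by
        by_contra hne
        exact (hMdisj i e he e' he' hne).2 h)]
    rw [Finset.prod_congr rfl (fun e he => by rw [hMσ1 i e he, hMσ2 i e he])]
    rw [Finset.prod_const]
  have hEsize : ∀ (σv : V → ℝ),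
      ∑ f : V → Bool, bern σv f * ((Finset.univ.filter (fun v => f v = true)).card : ℝ)
        = ∑ v, σv v := by
    intro σv
    have h1 : ∀ f : V → Bool, ((Finset.univ.filter (fun v => f v = true)).card : ℝ)
        = ∑ v, ind (f v) := by
      intro f
      rw [Finset.card_filter]
      push_cast
      exact Finset.sum_congr rfl fun v _ => by by_cases h : f v <;> simp [ind, h]
    simp_rw [h1, Finset.mul_sum]
    rw [Finset.sum_comm]
    exact Finset.sum_congr rfl fun v _ => sum_bern_ind σv v
  have hWtot : ∑ f : V → Bool, ∑ g : V → Bool, bern σv1 f * bern σv2 g = 1 := by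
    rw [← Finset.sum_mul_sum, sum_bern, sum_bern, mul_one]
  have hlow : (n : ℝ)/3 ≤ ∑ f : V → Bool, ∑ g : V → Bool,
      bern σv1 f * bern σv2 g * (∑ i : Fin n, (1 - miss i f g)) := by
    have hswap : ∑ f : V → Bool, ∑ g : V → Bool,
        bern σv1 f * bern σv2 g * (∑ i : Fin n, (1 - miss i f g))
        = ∑ i : Fin n, ∑ f : V → Bool, ∑ g : V → Bool,
            bern σv1 f * bern σv2 g * (1 - miss i f g) := by
      simp_rw [Finset.mul_sum]
      calc ∑ f : V → Bool, ∑ g : V → Bool, ∑ i : Fin n,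
              bern σv1 f * bern σv2 g * (1 - miss i f g)
          = ∑ f : V → Bool, ∑ i : Fin n, ∑ g : V → Bool,
              bern σv1 f * bern σv2 g * (1 - miss i f g) :=
            Finset.sum_congr rfl fun f _ => Finset.sum_comm
        _ = ∑ i : Fin n, ∑ f : V → Bool, ∑ g : V → Bool,
              bern σv1 f * bern σv2 g * (1 - miss i f g) := Finset.sum_comm
    rw [hswap]
    have hper : ∀ i : Fin n, (1:ℝ)/3 ≤ ∑ f : V → Bool, ∑ g : V → Bool,
        bern σv1 f * bern σv2 g * (1 - miss i f g) := by
      intro i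
      have hsub : ∑ f : V → Bool, ∑ g : V → Bool,
          bern σv1 f * bern σv2 g * (1 - miss i f g)
          = (∑ f : V → Bool, ∑ g : V → Bool, bern σv1 f * bern σv2 g)
            - (∑ f : V → Bool, ∑ g : V → Bool, bern σv1 f * bern σv2 g * miss i f g) := by
        rw [← Finset.sum_sub_distrib]
        refine Finset.sum_congr rfl fun f _ => ?_
        rw [← Finset.sum_sub_distrib]
        exact Finset.sum_congr rfl fun g _ => by ring
      rw [hsub, hWtot, hEmiss i]
      have := hMmiss i
      linarith
    calc (n:ℝ)/3 = ∑ _i : Fin n, (1:ℝ)/3 := by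
          rw [Finset.sum_const, Finset.card_univ, Fintype.card_fin, nsmul_eq_mul]
          ring
      _ ≤ _ := Finset.sum_le_sum fun i _ => hper i
  have hup : ∑ f : V → Bool, ∑ g : V → Bool,
      bern σv1 f * bern σv2 g * (∑ i : Fin n, (1 - miss i f g))
      ≤ (lq:ℝ) * ((∑ v, σv1 v) + (∑ v, σv2 v)) := by
    have h1 : ∑ f : V → Bool, ∑ g : V → Bool,
        bern σv1 f * bern σv2 g * (∑ i : Fin n, (1 - miss i f g))
        ≤ ∑ f : V → Bool, ∑ g : V → Bool,
          bern σv1 f * bern σv2 g * ((lq:ℝ) * (((Finset.univ.filter (fun v => f v = true)).card : ℝ)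
            + ((Finset.univ.filter (fun v => g v = true)).card : ℝ))) :=
      Finset.sum_le_sum fun f _ => Finset.sum_le_sum fun g _ =>
        mul_le_mul_of_nonneg_left (hpoint f g) (hW0 f g)
    refine le_trans h1 ?_
    have h2 : ∑ f : V → Bool, ∑ g : V → Bool,
        bern σv1 f * bern σv2 g * ((lq:ℝ) * (((Finset.univ.filter (fun v => f v = true)).card : ℝ)
            + ((Finset.univ.filter (fun v => g v = true)).card : ℝ)))
        = (lq:ℝ) * ((∑ v, σv1 v) + (∑ v, σv2 v)) := by
      have hsplit : ∀ f g : V → Bool,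
          bern σv1 f * bern σv2 g * ((lq:ℝ) * (((Finset.univ.filter (fun v => f v = true)).card : ℝ)
            + ((Finset.univ.filter (fun v => g v = true)).card : ℝ)))
          = (lq:ℝ) * ((bern σv1 f * ((Finset.univ.filter (fun v => f v = true)).card : ℝ)) * bern σv2 g)
            + (lq:ℝ) * (bern σv1 f * (bern σv2 g * ((Finset.univ.filter (fun v => g v = true)).card : ℝ))) := by
        intro f g
        ring
      simp_rw [hsplit]
      simp_rw [Finset.sum_add_distrib]
      have hA : ∑ f : V → Bool, ∑ g : V → Bool,
          (lq:ℝ) * ((bern σv1 f * ((Finset.univ.filter (fun v => f v = true)).card : ℝ)) * bern σv2 g)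
          = (lq:ℝ) * (∑ v, σv1 v) := by
        have : ∀ f : V → Bool, ∑ g : V → Bool,
            (lq:ℝ) * ((bern σv1 f * ((Finset.univ.filter (fun v => f v = true)).card : ℝ)) * bern σv2 g)
            = (lq:ℝ) * (bern σv1 f * ((Finset.univ.filter (fun v => f v = true)).card : ℝ)) := by
          intro f
          rw [← Finset.mul_sum, ← Finset.mul_sum, sum_bern, mul_one]
        simp_rw [this]
        rw [← Finset.mul_sum, hEsize σv1]
      have hB : ∑ f : V → Bool, ∑ g : V → Bool,
          (lq:ℝ) * (bern σv1 f * (bern σv2 g * ((Finset.univ.filter (fun v => g v = true)).card : ℝ)))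
          = (lq:ℝ) * (∑ v, σv2 v) := by
        have hBin : ∀ f : V → Bool, ∑ g : V → Bool,
            (lq:ℝ) * (bern σv1 f * (bern σv2 g * ((Finset.univ.filter (fun v => g v = true)).card : ℝ)))
            = (lq:ℝ) * (bern σv1 f * (∑ v, σv2 v)) := by
          intro f
          rw [← Finset.mul_sum, ← Finset.mul_sum, hEsize σv2]
        simp_rw [hBin]
        rw [← Finset.mul_sum]
        have : ∑ f : V → Bool, bern σv1 f * (∑ v, σv2 v) = (∑ v, σv2 v) := by
          rw [← Finset.sum_mul, sum_bern, one_mul]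
        rw [this]
      rw [hA, hB, ← mul_add]
    rw [h2]
  exact le_trans hlow hup

end KTPIR

/-- Katz–Trevisan PIR bound, Theorem 13 of the paper: there is a
universal constant `K` such that every one-round 2-server PIR scheme with `n`-bit
databases (`n, t, ℓ ≥ 1`), perfect recovery and perfect privacy satisfies
`t ≥ 2 log₂(n/ℓ) - K`. -/
theorem stmt17 :
    ∃ K : ℝ,
      ∀ (n t ℓ : ℕ), 1 ≤ n → 1 ≤ t → 1 ≤ ℓ →
        ∀ P : PIRScheme n t ℓ,
          P.ProbDist → P.Correct (1 / 2) → P.Secure 0 →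
          2 * Real.logb 2 ((n : ℝ) / ℓ) - K ≤ t := by
  classical
  refine ⟨9, ?_⟩
  intro n t ℓ hn ht hl P hPD hC hS
  obtain ⟨hpr0, hpr1⟩ := hPD
  -- Step 1: every r in the support decodes correctly for all x, i
  have hcor : ∀ r, P.pr r ≠ 0 → ∀ (x : Fin n → Bool) (i : Fin n),
      P.out i r (P.ans1 x (P.q1 i r)) (P.ans2 x (P.q2 i r)) = x i := by
    intro r hr x i
    by_contra hne
    have hCxi := hC x i
    have hsplit := Finset.sum_filter_add_sum_filter_not Finset.univ
      (fun r => P.out i r (P.ans1 x (P.q1 i r)) (P.ans2 x (P.q2 i r)) = x i) P.pr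
    rw [hpr1] at hsplit
    have hnonneg : 0 ≤ ∑ r' ∈ Finset.univ.filter
        (fun r' => ¬(P.out i r' (P.ans1 x (P.q1 i r')) (P.ans2 x (P.q2 i r')) = x i)), P.pr r' :=
      Finset.sum_nonneg fun r' _ => hpr0 r'
    have hzero : ∑ r' ∈ Finset.univ.filter
        (fun r' => ¬(P.out i r' (P.ans1 x (P.q1 i r')) (P.ans2 x (P.q2 i r')) = x i)), P.pr r' = 0 := by
      linarith
    have := (Finset.sum_eq_zero_iff_of_nonneg (fun r' _ => hpr0 r')).mp hzero r
      (by simp [hne])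
    exact hr this
  -- Step 2: marginals are index-independent
  have i0 : Fin n := ⟨0, hn⟩
  set p1 : (Fin t → Bool) → ℝ :=
    fun q => ∑ r ∈ Finset.univ.filter (fun r => P.q1 i0 r = q), P.pr r with hp1def
  set p2 : (Fin t → Bool) → ℝ :=
    fun q => ∑ r ∈ Finset.univ.filter (fun r => P.q2 i0 r = q), P.pr r with hp2def
  have habs : ∀ (F : (Fin t → Bool) → ℝ),
      (1/2) * (∑ q : Fin t → Bool, |F q|) ≤ 0 → ∀ q, F q = 0 := by
    intro F h q
    have h1 : ∑ q : Fin t → Bool, |F q| = 0 := by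
      have h2 : 0 ≤ ∑ q : Fin t → Bool, |F q| := Finset.sum_nonneg fun q _ => abs_nonneg _
      linarith
    have := (Finset.sum_eq_zero_iff_of_nonneg (fun q _ => abs_nonneg (F q))).mp h1 q
      (Finset.mem_univ q)
    exact abs_eq_zero.mp this
  have hp1 : ∀ i q, ∑ r ∈ Finset.univ.filter (fun r => P.q1 i r = q), P.pr r = p1 q := by
    intro i q
    have h := habs _ (hS i i0).1 q
    rw [hp1def]
    linarith [h]
  have hp2 : ∀ i q, ∑ r ∈ Finset.univ.filter (fun r => P.q2 i r = q), P.pr r = p2 q := by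
    intro i q
    have h := habs _ (hS i i0).2 q
    rw [hp2def]
    linarith [h]
  have hp1nonneg : ∀ q, 0 ≤ p1 q := fun q => Finset.sum_nonneg fun r _ => hpr0 r
  have hp2nonneg : ∀ q, 0 ≤ p2 q := fun q => Finset.sum_nonneg fun r _ => hpr0 r
  have hp1le : ∀ q, p1 q ≤ 1 := by
    intro q
    rw [hp1def, ← hpr1]
    exact Finset.sum_le_sum_of_subset_of_nonneg (Finset.subset_univ _) fun r _ _ => hpr0 r
  have hp2le : ∀ q, p2 q ≤ 1 := by
    intro q
    rw [hp2def, ← hpr1]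
    exact Finset.sum_le_sum_of_subset_of_nonneg (Finset.subset_univ _) fun r _ _ => hpr0 r
  have hp1sum : ∑ q : Fin t → Bool, p1 q = 1 := by
    rw [hp1def, ← hpr1]
    exact Finset.sum_fiberwise_of_maps_to (fun r _ => Finset.mem_univ (P.q1 i0 r)) P.pr
  have hp2sum : ∑ q : Fin t → Bool, p2 q = 1 := by
    rw [hp2def, ← hpr1]
    exact Finset.sum_fiberwise_of_maps_to (fun r _ => Finset.mem_univ (P.q2 i0 r)) P.pr
  -- the coupling induced by the query pair distribution
  set D : Fin n → (Fin t → Bool) → (Fin t → Bool) → ℝ := fun i a b =>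
    ∑ r ∈ Finset.univ.filter (fun r => P.q1 i r = a ∧ P.q2 i r = b), P.pr r with hDdef
  have hDpos : ∀ i a b, 0 ≤ D i a b := fun i a b => Finset.sum_nonneg fun r _ => hpr0 r
  have hDrow : ∀ i a, ∑ b, D i a b = p1 a := by
    intro i a
    rw [← hp1 i a, hDdef]
    have hff : ∀ b : Fin t → Bool, (Finset.univ.filter (fun r => P.q1 i r = a ∧ P.q2 i r = b))
        = (Finset.univ.filter (fun r => P.q1 i r = a)).filter (fun r => P.q2 i r = b) := by
      intro b; rw [Finset.filter_filter]
    simp_rw [hff]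
    exact Finset.sum_fiberwise_of_maps_to (fun r _ => Finset.mem_univ (P.q2 i r)) P.pr
  have hDcol : ∀ i b, ∑ a, D i a b = p2 b := by
    intro i b
    rw [← hp2 i b, hDdef]
    have hff : ∀ a : Fin t → Bool, (Finset.univ.filter (fun r => P.q1 i r = a ∧ P.q2 i r = b))
        = (Finset.univ.filter (fun r => P.q2 i r = b)).filter (fun r => P.q1 i r = a) := by
      intro a; rw [Finset.filter_filter]
      exact Finset.filter_congr fun r _ => by tauto
    simp_rw [hff]
    exact Finset.sum_fiberwise_of_maps_to (fun r _ => Finset.mem_univ (P.q1 i r)) P.pr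
  have hDdec : ∀ i a b, D i a b ≠ 0 →
      ∃ dec : (Fin ℓ → Bool) → (Fin ℓ → Bool) → Bool,
        ∀ x, dec (P.ans1 x a) (P.ans2 x b) = x i := by
    intro i a b hD
    have hex : ∃ r ∈ Finset.univ.filter (fun r => P.q1 i r = a ∧ P.q2 i r = b), P.pr r ≠ 0 := by
      by_contra h
      push_neg at h
      exact hD (Finset.sum_eq_zero h)
    obtain ⟨r, hrmem, hr⟩ := hex
    obtain ⟨hra, hrb⟩ := (Finset.mem_filter.mp hrmem).2
    exact ⟨P.out i r, fun x => by rw [← hra, ← hrb]; exact hcor r hr x i⟩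
  -- Step 3: split heavy queries into copies of probability at most 1/m
  set m : ℕ := 2 ^ t with hmdef
  have hm1 : 1 ≤ m := Nat.one_le_two_pow
  have hmpos : (0:ℝ) < m := by positivity
  set C1 : (Fin t → Bool) → ℕ := fun q => max 1 ⌈(m:ℝ) * p1 q⌉₊ with hC1def
  set C2 : (Fin t → Bool) → ℕ := fun q => max 1 ⌈(m:ℝ) * p2 q⌉₊ with hC2def
  have hcardQ : (Finset.univ : Finset (Fin t → Bool)).card = m := by
    simp [hmdef]
  have hC1pos : ∀ q, 0 < C1 q := fun q => by simp [hC1def]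
  have hC2pos : ∀ q, 0 < C2 q := fun q => by simp [hC2def]
  have hCler : ∀ (p : (Fin t → Bool) → ℝ) (q : Fin t → Bool),
      (m:ℝ) * p q ≤ (max 1 ⌈(m:ℝ) * p q⌉₊ : ℕ) := by
    intro p q
    have h1 : (m:ℝ) * p q ≤ ⌈(m:ℝ) * p q⌉₊ := Nat.le_ceil _
    have h2 : ((⌈(m:ℝ) * p q⌉₊ : ℕ) : ℝ) ≤ ((max 1 ⌈(m:ℝ) * p q⌉₊ : ℕ) : ℝ) := by
      exact_mod_cast le_max_right 1 ⌈(m:ℝ) * p q⌉₊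
    linarith
  have hC1ler : ∀ q, (m:ℝ) * p1 q ≤ C1 q := fun q => hCler p1 q
  have hC2ler : ∀ q, (m:ℝ) * p2 q ≤ C2 q := fun q => hCler p2 q
  have hClem : ∀ (p : (Fin t → Bool) → ℝ), (∀ q, 0 ≤ p q) → (∀ q, p q ≤ 1) →
      ∀ q, (max 1 ⌈(m:ℝ) * p q⌉₊ : ℕ) ≤ m := by
    intro p hp0 hp1' q
    have h1 : ⌈(m:ℝ) * p q⌉₊ ≤ m := by
      rw [Nat.ceil_le]
      calc (m:ℝ) * p q ≤ (m:ℝ) * 1 := by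
            have := hp1' q; have := hp0 q; nlinarith
        _ = m := by ring
    simp only [max_le_iff]
    omega
  have hC1lem : ∀ q, C1 q ≤ m := fun q => hClem p1 hp1nonneg hp1le q
  have hC2lem : ∀ q, C2 q ≤ m := fun q => hClem p2 hp2nonneg hp2le q
  have hCsum : ∀ (p : (Fin t → Bool) → ℝ), (∀ q, 0 ≤ p q) →
      (∑ q : Fin t → Bool, p q = 1) →
      ∑ q : Fin t → Bool, ((max 1 ⌈(m:ℝ) * p q⌉₊ : ℕ) : ℝ) ≤ 3 * m := by
    intro p hp0 hpsum
    have hbd : ∀ q, ((max 1 ⌈(m:ℝ) * p q⌉₊ : ℕ) : ℝ) ≤ 2 + (m:ℝ) * p q := by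
      intro q
      have h1 : (⌈(m:ℝ) * p q⌉₊ : ℝ) < (m:ℝ) * p q + 1 := by
        apply Nat.ceil_lt_add_one
        have := hp0 q; positivity
      have h2 : ((max 1 ⌈(m:ℝ) * p q⌉₊ : ℕ) : ℝ) ≤ max 1 ((⌈(m:ℝ) * p q⌉₊ : ℕ) : ℝ) := by
        push_cast
        simp
      have h3 : max 1 ((⌈(m:ℝ) * p q⌉₊ : ℕ) : ℝ) ≤ 1 + ((⌈(m:ℝ) * p q⌉₊ : ℕ) : ℝ) := by
        apply max_le
        · linarith [Nat.cast_nonneg (α := ℝ) ⌈(m:ℝ) * p q⌉₊]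
        · linarith
      linarith
    calc ∑ q : Fin t → Bool, ((max 1 ⌈(m:ℝ) * p q⌉₊ : ℕ) : ℝ)
        ≤ ∑ q : Fin t → Bool, (2 + (m:ℝ) * p q) := Finset.sum_le_sum fun q _ => hbd q
      _ = 2 * (m:ℝ) + (m:ℝ) * 1 := by
          rw [Finset.sum_add_distrib, ← Finset.mul_sum, hpsum, Finset.sum_const, hcardQ,
            nsmul_eq_mul]
          ring
      _ ≤ 3 * m := by linarith
  have hC1sum : ∑ q : Fin t → Bool, ((C1 q : ℕ) : ℝ) ≤ 3 * m := hCsum p1 hp1nonneg hp1sum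
  have hC2sum : ∑ q : Fin t → Bool, ((C2 q : ℕ) : ℝ) ≤ 3 * m := hCsum p2 hp2nonneg hp2sum
  -- the split coupling on V = queries × copies
  set D' : Fin n → ((Fin t → Bool) × Fin m) → ((Fin t → Bool) × Fin m) → ℝ := fun i v u =>
    if v.2.val < C1 v.1 ∧ u.2.val < C2 u.1 then D i v.1 u.1 / ((C1 v.1 : ℝ) * (C2 u.1 : ℝ)) else 0
    with hD'def
  have hD'pos : ∀ i v u, 0 ≤ D' i v u := by
    intro i v u
    rw [hD'def]
    dsimp only
    split
    · apply div_nonneg (hDpos i v.1 u.1)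
      positivity
    · exact le_rfl
  have hD'row : ∀ i v, ∑ u, D' i v u
      = if v.2.val < C1 v.1 then p1 v.1 / (C1 v.1 : ℝ) else 0 := by
    intro i v
    rw [Fintype.sum_prod_type]
    by_cases hv : v.2.val < C1 v.1
    · rw [if_pos hv]
      have hinner : ∀ q' : Fin t → Bool, ∑ c' : Fin m, D' i v (q', c')
          = D i v.1 q' / (C1 v.1 : ℝ) := by
        intro q'
        have h1 : ∀ c' : Fin m, D' i v (q', c')
            = if c'.val < C2 q' then D i v.1 q' / ((C1 v.1 : ℝ) * (C2 q' : ℝ)) else 0 := by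
          intro c'
          rw [hD'def]
          dsimp only
          by_cases h : c'.val < C2 q' <;> simp [h, hv]
        simp_rw [h1]
        rw [Finset.sum_ite, Finset.sum_const, Finset.sum_const_zero, add_zero,
          KTPIR.card_fin_lt m (C2 q') (hC2lem q'), nsmul_eq_mul]
        have hC2ne : ((C2 q' : ℝ)) ≠ 0 := by
          have := hC2pos q'; positivity
        rw [div_mul_eq_div_div, mul_comm, div_mul_cancel₀ _ hC2ne]
      simp_rw [hinner]
      rw [← Finset.sum_div, hDrow]
    · rw [if_neg hv]
      apply Finset.sum_eq_zero
      intro q' _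
      apply Finset.sum_eq_zero
      intro c' _
      rw [hD'def]
      dsimp only
      rw [if_neg]
      tauto
  have hD'col : ∀ i u, ∑ v, D' i v u
      = if u.2.val < C2 u.1 then p2 u.1 / (C2 u.1 : ℝ) else 0 := by
    intro i u
    rw [Fintype.sum_prod_type]
    by_cases hu : u.2.val < C2 u.1
    · rw [if_pos hu]
      have hinner : ∀ q : Fin t → Bool, ∑ c : Fin m, D' i (q, c) u
          = D i q u.1 / (C2 u.1 : ℝ) := by
        intro q
        have h1 : ∀ c : Fin m, D' i (q, c) u
            = if c.val < C1 q then D i q u.1 / ((C1 q : ℝ) * (C2 u.1 : ℝ)) else 0 := by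
          intro c
          rw [hD'def]
          dsimp only
          by_cases h : c.val < C1 q <;> simp [h, hu]
        simp_rw [h1]
        rw [Finset.sum_ite, Finset.sum_const, Finset.sum_const_zero, add_zero,
          KTPIR.card_fin_lt m (C1 q) (hC1lem q), nsmul_eq_mul]
        have hC1ne : ((C1 q : ℝ)) ≠ 0 := by
          have := hC1pos q; positivity
        rw [div_mul_eq_div_div_swap, mul_comm, div_mul_cancel₀ _ hC1ne]
      simp_rw [hinner]
      rw [← Finset.sum_div, hDcol]
    · rw [if_neg hu]
      apply Finset.sum_eq_zero
      intro q _
      apply Finset.sum_eq_zero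
      intro c _
      rw [hD'def]
      dsimp only
      rw [if_neg]
      tauto
  have hD'rowle : ∀ i v, ∑ u, D' i v u ≤ 1 / m := by
    intro i v
    rw [hD'row]
    split
    · rw [div_le_div_iff₀ (by exact_mod_cast hC1pos v.1) hmpos]
      have := hC1ler v.1
      linarith
    · positivity
  have hD'colle : ∀ i u, ∑ v, D' i v u ≤ 1 / m := by
    intro i u
    rw [hD'col]
    split
    · rw [div_le_div_iff₀ (by exact_mod_cast hC2pos u.1) hmpos]
      have := hC2ler u.1
      linarith
    · positivity
  have hD'tot : ∀ i, ∑ v, ∑ u, D' i v u = 1 := by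
    intro i
    have h1 : ∀ v : (Fin t → Bool) × Fin m, ∑ u, D' i v u
        = if v.2.val < C1 v.1 then p1 v.1 / (C1 v.1 : ℝ) else 0 := hD'row i
    simp_rw [h1]
    rw [Fintype.sum_prod_type]
    have h2 : ∀ q : Fin t → Bool,
        (∑ c : Fin m, if c.val < C1 q then p1 q / (C1 q : ℝ) else 0) = p1 q := by
      intro q
      rw [Finset.sum_ite, Finset.sum_const, Finset.sum_const_zero, add_zero,
        KTPIR.card_fin_lt m (C1 q) (hC1lem q), nsmul_eq_mul]
      have hC1ne : ((C1 q : ℝ)) ≠ 0 := by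
        have := hC1pos q; positivity
      rw [mul_comm, div_mul_cancel₀ _ hC1ne]
    simp_rw [h2]
    exact hp1sum
  -- Step 4: extract matchings of size at least m/2
  have hMex : ∀ i, ∃ M : Finset (((Fin t → Bool) × Fin m) × ((Fin t → Bool) × Fin m)),
      (∀ e ∈ M, D' i e.1 e.2 ≠ 0) ∧
      (∀ e ∈ M, ∀ e' ∈ M, e ≠ e' → e.1 ≠ e'.1 ∧ e.2 ≠ e'.2) ∧
      ∑ v, ∑ u, D' i v u ≤ 2 * (1/m) * M.card :=
    fun i => KTPIR.exists_matching (1/m) _ (D' i) le_rfl (hD'pos i) (hD'rowle i) (hD'colle i)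
  choose M hM0 hM1 hM2 using hMex
  have hMcard : ∀ i, (m:ℝ) ≤ 2 * (M i).card := by
    intro i
    have h := hM2 i
    rw [hD'tot i] at h
    have h2 := mul_le_mul_of_nonneg_left h (le_of_lt hmpos)
    have hmne : (m:ℝ) ≠ 0 := ne_of_gt hmpos
    field_simp at h2
    linarith
  have hMvalid : ∀ i, ∀ e ∈ M i,
      (e.1.2.val < C1 e.1.1 ∧ e.2.2.val < C2 e.2.1) ∧ D i e.1.1 e.2.1 ≠ 0 := by
    intro i e he
    have h := hM0 i e he
    rw [hD'def] at h
    dsimp only at h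
    by_cases hc : e.1.2.val < C1 e.1.1 ∧ e.2.2.val < C2 e.2.1
    · refine ⟨hc, ?_⟩
      intro hD0
      rw [if_pos hc, hD0, zero_div] at h
      exact h rfl
    · rw [if_neg hc] at h
      exact absurd rfl h
  -- Step 5: Bernoulli sampling of the answer blocks
  set σ : ℝ := (Real.sqrt (m:ℝ))⁻¹ with hσdef
  have hsqrtpos : 0 < Real.sqrt (m:ℝ) := Real.sqrt_pos.mpr hmpos
  have hsqrt1 : 1 ≤ Real.sqrt (m:ℝ) := by
    rw [show (1:ℝ) = Real.sqrt 1 by simp]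
    exact Real.sqrt_le_sqrt (by exact_mod_cast hm1)
  have hσ0 : 0 ≤ σ := by rw [hσdef]; positivity
  have hσ1 : σ ≤ 1 := by
    rw [hσdef]
    exact inv_le_one_of_one_le₀ hsqrt1
  set σv1 : ((Fin t → Bool) × Fin m) → ℝ := fun v => if v.2.val < C1 v.1 then σ else 0
    with hσv1def
  set σv2 : ((Fin t → Bool) × Fin m) → ℝ := fun v => if v.2.val < C2 v.1 then σ else 0
    with hσv2def
  have hσv10 : ∀ v, 0 ≤ σv1 v := by
    intro v; rw [hσv1def]; dsimp only; split <;> simp [hσ0]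
  have hσv11 : ∀ v, σv1 v ≤ 1 := by
    intro v; rw [hσv1def]; dsimp only; split <;> simp [hσ1]
  have hσv20 : ∀ v, 0 ≤ σv2 v := by
    intro v; rw [hσv2def]; dsimp only; split <;> simp [hσ0]
  have hσv21 : ∀ v, σv2 v ≤ 1 := by
    intro v; rw [hσv2def]; dsimp only; split <;> simp [hσ1]
  have hσsum : ∀ (C : (Fin t → Bool) → ℕ), (∀ q, C q ≤ m) →
      (∑ q : Fin t → Bool, ((C q : ℕ) : ℝ) ≤ 3 * m) →
      ∑ v : (Fin t → Bool) × Fin m, (if v.2.val < C v.1 then σ else 0)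
        ≤ 3 * Real.sqrt (m:ℝ) := by
    intro C hClem' hCsum'
    rw [Fintype.sum_prod_type]
    have h1 : ∀ q : Fin t → Bool,
        (∑ c : Fin m, if c.val < C q then σ else 0) = (C q : ℝ) * σ := by
      intro q
      rw [Finset.sum_ite, Finset.sum_const, Finset.sum_const_zero, add_zero,
        KTPIR.card_fin_lt m (C q) (hClem' q), nsmul_eq_mul]
    simp_rw [h1]
    rw [← Finset.sum_mul]
    calc (∑ q : Fin t → Bool, ((C q : ℕ) : ℝ)) * σ ≤ (3 * m) * σ :=
          mul_le_mul_of_nonneg_right hCsum' hσ0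
      _ = 3 * Real.sqrt (m:ℝ) := by
          rw [hσdef]
          rw [mul_assoc]
          congr 1
          rw [← Real.mul_self_sqrt (le_of_lt hmpos)]
          field_simp
          rw [Real.sqrt_sq hsqrtpos.le]
  have hσv1sum : ∑ v, σv1 v ≤ 3 * Real.sqrt (m:ℝ) := by
    rw [hσv1def]
    exact hσsum C1 hC1lem hC1sum
  have hσv2sum : ∑ v, σv2 v ≤ 3 * Real.sqrt (m:ℝ) := by
    rw [hσv2def]
    exact hσsum C2 hC2lem hC2sum
  -- Step 6: the decodable set and its cardinality bound
  set DecSet : (((Fin t → Bool) × Fin m) → Bool) → (((Fin t → Bool) × Fin m) → Bool)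
      → Finset (Fin n) := fun f g =>
    Finset.univ.filter (fun i => ∃ a b : (Fin t → Bool) × Fin m,
      f a = true ∧ g b = true ∧ ∃ dec : (Fin ℓ → Bool) → (Fin ℓ → Bool) → Bool,
        ∀ x, dec (P.ans1 x a.1) (P.ans2 x b.1) = x i) with hDecSetdef
  have hDS : ∀ f g i, (∃ e ∈ M i, f e.1 = true ∧ g e.2 = true) → i ∈ DecSet f g := by
    intro f g i ⟨e, he, hf, hg⟩
    rw [hDecSetdef]
    refine Finset.mem_filter.mpr ⟨Finset.mem_univ i, e.1, e.2, hf, hg, ?_⟩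
    exact hDdec i e.1.1 e.2.1 (hMvalid i e he).2
  have hcard' : ∀ f g, ((DecSet f g).card : ℝ)
      ≤ (ℓ:ℝ) * (((Finset.univ.filter (fun v => f v = true)).card : ℝ)
          + ((Finset.univ.filter (fun v => g v = true)).card : ℝ)) := by
    intro f g
    have h := KTPIR.card_decset n ℓ (fun x v => P.ans1 x v.1) (fun x v => P.ans2 x v.1)
      f g (DecSet f g) (by
        intro i hi
        rw [hDecSetdef] at hi
        exact (Finset.mem_filter.mp hi).2)
    exact_mod_cast h
  -- Step 7: apply the sampling bound
  have hmain := KTPIR.sampling n ℓ σ σv1 σv2 hσv10 hσv11 hσv20 hσv21 M hM1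
    (fun i e he => by
      rw [hσv1def]
      dsimp only
      rw [if_pos (hMvalid i e he).1.1])
    (fun i e he => by
      rw [hσv2def]
      dsimp only
      rw [if_pos (hMvalid i e he).1.2])
    (fun i => by
      rw [hσdef]
      exact KTPIR.pow_miss m ((M i).card) hm1 (hMcard i))
    DecSet hDS hcard'
  -- Step 8: conclude
  have hfinal : (n:ℝ)/3 ≤ (ℓ:ℝ) * (3 * Real.sqrt ((2^t : ℕ):ℝ) + 3 * Real.sqrt ((2^t : ℕ):ℝ)) := by
    refine le_trans hmain ?_
    have hl0 : (0:ℝ) ≤ ℓ := by positivity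
    have := add_le_add hσv1sum hσv2sum
    have h2 := mul_le_mul_of_nonneg_left this hl0
    calc (ℓ:ℝ) * ((∑ v, σv1 v) + (∑ v, σv2 v))
        ≤ (ℓ:ℝ) * (3 * Real.sqrt (m:ℝ) + 3 * Real.sqrt (m:ℝ)) := h2
      _ = (ℓ:ℝ) * (3 * Real.sqrt ((2^t : ℕ):ℝ) + 3 * Real.sqrt ((2^t : ℕ):ℝ)) := by
          rw [hmdef]
  exact KTPIR.final_chain n t ℓ hn hl hfinal
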